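/- arXiv:2410.15170 — 3 statements merged into one kernel-verified Lean document; each statement's English description precedes it below -/
import Mathlib

section
/- For window $h_0^{\Omega/N}(t) := \overline{e^{\pi i t^T(\Omega/N)t}}$, the STFT of the Dirac comb $\epsilon_n$ admits the theta function expression $\mathbf{V}_{h_0^{\Omega/N}}\epsilon_n(x,\xi) = e^{\pi i x^T(\Omega/N)x}\,e^{\pi i n^T(\Omega/N)n}\,e^{2\pi \bar{z}^T n}\,\vartheta_N(i(\bar{z} + i\Omega n/N), \Omega)$, where $\bar{z} := -i(\Omega/N)x - i\xi$. -/
open scoped BigOperators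

/-- The complex quadratic form `vᵀ Ω v`. -/
noncomputable def quadFormC {d : ℕ} (Ω : Matrix (Fin d) (Fin d) ℂ) (v : Fin d → ℂ) : ℂ :=
  ∑ i, ∑ j, v i * Ω i j * v j

/-- The Riemann theta function of order `N`. -/
noncomputable def riemannTheta {d : ℕ} (N : ℕ) (Ω : Matrix (Fin d) (Fin d) ℂ)
    (z : Fin d → ℂ) : ℂ :=
  ∑' k : Fin d → ℤ,
    Complex.exp ((Real.pi : ℂ) * Complex.I * N * quadFormC Ω (fun i => (k i : ℂ))
      + 2 * (Real.pi : ℂ) * Complex.I * N * ∑ i, (k i : ℂ) * z i)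

/-- The bilinear form `uᵀ Ω v`. -/
noncomputable def bilinC {d : ℕ} (Ω : Matrix (Fin d) (Fin d) ℂ) (u v : Fin d → ℂ) : ℂ :=
  ∑ i, ∑ j, u i * Ω i j * v j

lemma bilinC_symm {d : ℕ} {Ω : Matrix (Fin d) (Fin d) ℂ} (hΩ : Ω.IsSymm) (u v : Fin d → ℂ) :
    bilinC Ω u v = bilinC Ω v u := by
  rw [bilinC, bilinC, Finset.sum_comm]
  refine Finset.sum_congr rfl fun i _ => Finset.sum_congr rfl fun j _ => ?_
  rw [hΩ.apply i j]; ring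

lemma quad_expand {d : ℕ} (Ω : Matrix (Fin d) (Fin d) ℂ) (a c kv : Fin d → ℂ) (s : ℂ) :
    quadFormC Ω (fun i => a i + s * kv i - c i) =
      quadFormC Ω a + s * s * quadFormC Ω kv + quadFormC Ω c
        + s * bilinC Ω a kv + s * bilinC Ω kv a
        - bilinC Ω a c - bilinC Ω c a - s * bilinC Ω kv c - s * bilinC Ω c kv := by
  simp only [quadFormC, bilinC, Finset.mul_sum, ← Finset.sum_add_distrib, ← Finset.sum_sub_distrib]
  exact Finset.sum_congr rfl fun i _ => Finset.sum_congr rfl fun j _ => by ring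

lemma quad_neg {d : ℕ} (Ω : Matrix (Fin d) (Fin d) ℂ) (kv : Fin d → ℂ) :
    quadFormC Ω (fun i => -kv i) = quadFormC Ω kv := by
  simp only [quadFormC]
  exact Finset.sum_congr rfl fun i _ => Finset.sum_congr rfl fun j _ => by ring

lemma sum_mul_inner {d : ℕ} (Ω : Matrix (Fin d) (Fin d) ℂ) (u v : Fin d → ℂ) :
    ∑ i, u i * ∑ j, Ω i j * v j = bilinC Ω u v := by
  simp only [bilinC, Finset.mul_sum]
  exact Finset.sum_congr rfl fun i _ => Finset.sum_congr rfl fun j _ => by ring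

lemma dot_expand {d : ℕ} (xv a kv : Fin d → ℂ) (s : ℂ) :
    ∑ i, xv i * (a i + s * kv i) = ∑ i, xv i * a i + s * ∑ i, xv i * kv i := by
  simp only [Finset.mul_sum, ← Finset.sum_add_distrib]
  exact Finset.sum_congr rfl fun i _ => by ring

lemma zbar_dot {d : ℕ} (Ω : Matrix (Fin d) (Fin d) ℂ) (c xv a : Fin d → ℂ) (N : ℂ) :
    ∑ i, (-Complex.I * (∑ j, Ω i j * c j) / N - Complex.I * xv i) * a i
      = (-Complex.I / N) * bilinC Ω a c - Complex.I * ∑ i, xv i * a i := by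
  have h : ∀ i, (-Complex.I * (∑ j, Ω i j * c j) / N - Complex.I * xv i) * a i
      = (-Complex.I / N) * (a i * ∑ j, Ω i j * c j) - Complex.I * (xv i * a i) := fun i => by ring
  rw [Finset.sum_congr rfl fun i _ => h i, Finset.sum_sub_distrib, ← Finset.mul_sum,
    ← Finset.mul_sum, sum_mul_inner]

lemma theta_dot {d : ℕ} (Ω : Matrix (Fin d) (Fin d) ℂ) (c xv a kv : Fin d → ℂ) (N : ℂ) :
    ∑ i, (-kv i) * (Complex.I * ((-Complex.I * (∑ j, Ω i j * c j) / N - Complex.I * xv i)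
        + Complex.I * (∑ j, Ω i j * a j) / N))
      = (-(1/N)) * bilinC Ω kv c - ∑ i, xv i * kv i + (1/N) * bilinC Ω kv a := by
  have h : ∀ i, (-kv i) * (Complex.I * ((-Complex.I * (∑ j, Ω i j * c j) / N - Complex.I * xv i)
        + Complex.I * (∑ j, Ω i j * a j) / N))
      = (-(1/N)) * (kv i * ∑ j, Ω i j * c j) - (xv i * kv i)
          + (1/N) * (kv i * ∑ j, Ω i j * a j) := by
    intro i
    linear_combination (kv i * ((∑ j, Ω i j * c j) / N + xv i - (∑ j, Ω i j * a j) / N)) *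
      Complex.I_mul_I
  rw [Finset.sum_congr rfl fun i _ => h i, Finset.sum_add_distrib, Finset.sum_sub_distrib,
    ← Finset.mul_sum, ← Finset.mul_sum, sum_mul_inner, sum_mul_inner]

lemma key_term {d : ℕ} (N : ℕ) (hN : 0 < N) (Ω : Matrix (Fin d) (Fin d) ℂ)
    (hΩsym : Ω.IsSymm) (a c xv kv : Fin d → ℂ) :
    Complex.exp ((Real.pi : ℂ) * Complex.I *
          quadFormC Ω (fun i => a i + N * kv i - c i) / N) *
        Complex.exp (-2 * (Real.pi : ℂ) * Complex.I * ∑ i, xv i * (a i + N * kv i)) =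
      Complex.exp ((Real.pi : ℂ) * Complex.I * quadFormC Ω c / N) *
        Complex.exp ((Real.pi : ℂ) * Complex.I * quadFormC Ω a / N) *
        Complex.exp (2 * (Real.pi : ℂ) *
          ∑ i, (-Complex.I * (∑ j, Ω i j * c j) / N - Complex.I * xv i) * a i) *
        Complex.exp ((Real.pi : ℂ) * Complex.I * N * quadFormC Ω (fun i => -kv i)
          + 2 * (Real.pi : ℂ) * Complex.I * N *
            ∑ i, (-kv i) * (Complex.I * ((-Complex.I * (∑ j, Ω i j * c j) / N - Complex.I * xv i)
              + Complex.I * (∑ j, Ω i j * a j) / N))) := by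
  have hNc : (N : ℂ) ≠ 0 := Nat.cast_ne_zero.mpr hN.ne'
  rw [← Complex.exp_add, ← Complex.exp_add, ← Complex.exp_add, ← Complex.exp_add]
  congr 1
  rw [quad_expand, quad_neg, dot_expand, zbar_dot, theta_dot,
    bilinC_symm hΩsym c a, bilinC_symm hΩsym c kv, bilinC_symm hΩsym kv a]
  field_simp
  ring

/-- for the window `h₀^{Ω/N}(t) = conj(e^{πi tᵀ(Ω/N)t})`, the STFT of the
Dirac comb `ε_n` is given by the theta-function expression
`V_{h₀^{Ω/N}} ε_n(x,ξ) = e^{πi xᵀ(Ω/N)x} e^{πi nᵀ(Ω/N)n} e^{2π z̄ᵀn} ϑ_N(i(z̄ + iΩn/N), Ω)`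
with `z̄ = -i(Ω/N)x - iξ`.  Here the left-hand side is the series
`∑_{k∈ℤᵈ} conj(h₀^{Ω/N}(n+Nk-x)) e^{-2πi ξᵀ(n+Nk)}`. -/
theorem stft_gaussianComb_theta {d : ℕ} (N : ℕ) (hN : 0 < N)
    (Ω : Matrix (Fin d) (Fin d) ℂ) (hΩsym : Ω.IsSymm)
    (hΩpos : (Ω.map Complex.im).PosDef)
    (n : Fin d → Fin N) (x ξ : Fin d → ℝ) :
    (∑' k : Fin d → ℤ,
        Complex.exp ((Real.pi : ℂ) * Complex.I *
            quadFormC Ω (fun i => ((n i : ℕ) : ℂ) + N * k i - (x i : ℂ)) / N) *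
          Complex.exp (-2 * (Real.pi : ℂ) * Complex.I *
            ∑ i, (ξ i : ℂ) * (((n i : ℕ) : ℂ) + N * k i))) =
      Complex.exp ((Real.pi : ℂ) * Complex.I *
          quadFormC Ω (fun i => (x i : ℂ)) / N) *
        Complex.exp ((Real.pi : ℂ) * Complex.I *
          quadFormC Ω (fun i => ((n i : ℕ) : ℂ)) / N) *
        Complex.exp (2 * (Real.pi : ℂ) *
          ∑ i, (-Complex.I * (∑ j, Ω i j * (x j : ℂ)) / N - Complex.I * (ξ i : ℂ)) *
            ((n i : ℕ) : ℂ)) *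
        riemannTheta N Ω (fun i =>
          Complex.I * ((-Complex.I * (∑ j, Ω i j * (x j : ℂ)) / N - Complex.I * (ξ i : ℂ))
            + Complex.I * (∑ j, Ω i j * ((n j : ℕ) : ℂ)) / N)) := by
  set z : Fin d → ℂ := fun i =>
    Complex.I * ((-Complex.I * (∑ j, Ω i j * (x j : ℂ)) / N - Complex.I * (ξ i : ℂ))
      + Complex.I * (∑ j, Ω i j * ((n j : ℕ) : ℂ)) / N) with hz
  rw [riemannTheta]
  rw [show (∑' k : Fin d → ℤ,
      Complex.exp ((Real.pi : ℂ) * Complex.I * N * quadFormC Ω (fun i => (k i : ℂ))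
        + 2 * (Real.pi : ℂ) * Complex.I * N * ∑ i, (k i : ℂ) * z i)) =
    ∑' k : Fin d → ℤ,
      Complex.exp ((Real.pi : ℂ) * Complex.I * N * quadFormC Ω (fun i => (-(k i) : ℂ))
        + 2 * (Real.pi : ℂ) * Complex.I * N * ∑ i, (-(k i) : ℂ) * z i) from
    ((Equiv.neg (Fin d → ℤ)).tsum_eq _).symm.trans (by
      refine tsum_congr fun k => ?_
      simp only [Equiv.neg_apply, Pi.neg_apply, Int.cast_neg])]
  rw [← tsum_mul_left]
  refine tsum_congr fun k => ?_
  rw [hz]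
  exact key_term N hN Ω hΩsym (fun i => ((n i : ℕ) : ℂ)) (fun i => (x i : ℂ))
    (fun i => (ξ i : ℂ)) (fun i => (k i : ℂ))
end

section
/- The Bargmann type transform $\mathbf{B}_{\Omega,N}\varphi(z) = \sum_{n\in I_N} a_n\, e^{-\pi n^T(\Omega/N)n}\, e^{2\pi z^T n}\, \vartheta_N(i(z + i\Omega n/N),\Omega)$ of $\varphi = \sum_{n\in I_N} a_n \epsilon_n$ satisfies the quasi-periodicity conditions $\mathbf{B}_{\Omega,N}\varphi(z + im) = \mathbf{B}_{\Omega,N}\varphi(z)$ and $\mathbf{B}_{\Omega,N}\varphi(z - i\Omega k) = e^{-\pi i N k^T\Omega k + 2\pi N z^T k}\,\mathbf{B}_{\Omega,N}\varphi(z)$ for all $m,k \in \mathbb{Z}^d$. -/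
open scoped BigOperators

/-- The Bargmann type transform of `φ = ∑_{n∈I_N} a_n ε_n`:
`B_{Ω,N}φ(z) = ∑_{n∈I_N} a_n e^{-π nᵀ(Ω/N)n} e^{2π zᵀn} ϑ_N(i(z + iΩn/N), Ω)`. -/
noncomputable def bargmann {d : ℕ} (N : ℕ) (Ω : Matrix (Fin d) (Fin d) ℂ)
    (a : (Fin d → Fin N) → ℂ) (z : Fin d → ℂ) : ℂ :=
  ∑ n : Fin d → Fin N, a n *
    Complex.exp (-(Real.pi : ℂ) * quadFormC Ω (fun i => ((n i : ℕ) : ℂ)) / N) *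
    Complex.exp (2 * (Real.pi : ℂ) * ∑ i, z i * ((n i : ℕ) : ℂ)) *
    riemannTheta N Ω (fun i =>
      Complex.I * (z i + Complex.I * (∑ j, Ω i j * ((n j : ℕ) : ℂ)) / N))

lemma exp_two_pi_I_int (M : ℤ) : Complex.exp (2 * (Real.pi:ℂ) * Complex.I * (M:ℂ)) = 1 := by
  rw [show 2 * (Real.pi:ℂ) * Complex.I * (M:ℂ) = (M:ℂ) * (2 * Real.pi * Complex.I) by ring]
  exact Complex.exp_int_mul_two_pi_mul_I M

lemma bform_comm {d : ℕ} (Ω : Matrix (Fin d) (Fin d) ℂ) (h : Ω.IsSymm) (u v : Fin d → ℂ) :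
    ∑ i, ∑ j, u i * Ω i j * v j = ∑ i, ∑ j, v i * Ω i j * u j := by
  rw [Finset.sum_comm]
  refine Finset.sum_congr rfl fun i _ => Finset.sum_congr rfl fun j _ => ?_
  rw [h.apply i j]; ring

lemma riemannTheta_add_int {d : ℕ} (N : ℕ) (Ω : Matrix (Fin d) (Fin d) ℂ)
    (z : Fin d → ℂ) (m : Fin d → ℤ) :
    riemannTheta N Ω (fun i => z i + (m i : ℂ)) = riemannTheta N Ω z := by
  unfold riemannTheta
  refine tsum_congr fun k => ?_
  have h1 : ∑ i, (k i : ℂ) * (z i + (m i : ℂ))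
      = (∑ i, (k i : ℂ) * z i) + ((∑ i, k i * m i : ℤ) : ℂ) := by
    push_cast
    rw [← Finset.sum_add_distrib]
    exact Finset.sum_congr rfl fun i _ => by ring
  rw [h1, show (Real.pi:ℂ)*Complex.I*N*quadFormC Ω (fun i => (k i:ℂ))
      + 2*(Real.pi:ℂ)*Complex.I*N*((∑ i, (k i:ℂ)*z i) + ((∑ i, k i * m i : ℤ):ℂ))
      = ((Real.pi:ℂ)*Complex.I*N*quadFormC Ω (fun i => (k i:ℂ))
      + 2*(Real.pi:ℂ)*Complex.I*N*(∑ i, (k i:ℂ)*z i))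
      + 2*(Real.pi:ℂ)*Complex.I*(((N:ℤ) * ∑ i, k i * m i : ℤ):ℂ) by push_cast; ring]
  rw [Complex.exp_add, exp_two_pi_I_int, mul_one]

lemma riemannTheta_add_omega {d : ℕ} (N : ℕ) (Ω : Matrix (Fin d) (Fin d) ℂ)
    (hΩsym : Ω.IsSymm) (w : Fin d → ℂ) (k : Fin d → ℤ) :
    riemannTheta N Ω (fun i => w i + ∑ j, Ω i j * (k j : ℂ)) =
      Complex.exp (-(Real.pi:ℂ)*Complex.I*N*quadFormC Ω (fun i => (k i:ℂ))
        - 2*(Real.pi:ℂ)*Complex.I*N*∑ i, (k i:ℂ)*w i) * riemannTheta N Ω w := by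
  unfold riemannTheta
  rw [← tsum_mul_left, ← (Equiv.subRight k).tsum_eq]
  refine tsum_congr fun l => ?_
  rw [← Complex.exp_add]
  congr 1
  simp only [Equiv.subRight_apply, Pi.sub_apply, Int.cast_sub]
  have hQ : quadFormC Ω (fun i => (l i:ℂ) - (k i:ℂ))
      = quadFormC Ω (fun i => (l i:ℂ)) - (∑ i, ∑ j, (l i:ℂ) * Ω i j * (k j:ℂ))
        - (∑ i, ∑ j, (k i:ℂ) * Ω i j * (l j:ℂ)) + quadFormC Ω (fun i => (k i:ℂ)) := by
    unfold quadFormC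
    rw [← Finset.sum_sub_distrib, ← Finset.sum_sub_distrib, ← Finset.sum_add_distrib]
    refine Finset.sum_congr rfl fun i _ => ?_
    rw [← Finset.sum_sub_distrib, ← Finset.sum_sub_distrib, ← Finset.sum_add_distrib]
    exact Finset.sum_congr rfl fun j _ => by ring
  have hsym : (∑ i, ∑ j, (k i:ℂ) * Ω i j * (l j:ℂ))
      = ∑ i, ∑ j, (l i:ℂ) * Ω i j * (k j:ℂ) := bform_comm Ω hΩsym _ _
  have hL : ∑ i, ((l i:ℂ) - (k i:ℂ)) * (w i + ∑ j, Ω i j * (k j:ℂ))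
      = (∑ i, (l i:ℂ) * w i) - (∑ i, (k i:ℂ) * w i)
        + (∑ i, ∑ j, (l i:ℂ) * Ω i j * (k j:ℂ)) - quadFormC Ω (fun i => (k i:ℂ)) := by
    unfold quadFormC
    rw [← Finset.sum_sub_distrib, ← Finset.sum_add_distrib, ← Finset.sum_sub_distrib]
    refine Finset.sum_congr rfl fun i _ => ?_
    rw [show ∑ j, (l i:ℂ)*Ω i j*(k j:ℂ) = (l i:ℂ) * ∑ j, Ω i j * (k j:ℂ) by
      rw [Finset.mul_sum]; exact Finset.sum_congr rfl fun j _ => by ring]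
    rw [show ∑ j, (k i:ℂ)*Ω i j*(k j:ℂ) = (k i:ℂ) * ∑ j, Ω i j * (k j:ℂ) by
      rw [Finset.mul_sum]; exact Finset.sum_congr rfl fun j _ => by ring]
    ring
  rw [hQ, hsym, hL]
  ring

/-- the Bargmann type transform is quasi-periodic:
`B(z+im) = B(z)` and `B(z-iΩk) = e^{-πiN kᵀΩk + 2πN zᵀk} B(z)` for `m,k ∈ ℤᵈ`. -/
theorem bargmann_quasiperiodic {d : ℕ} (N : ℕ) (hN : 0 < N)
    (Ω : Matrix (Fin d) (Fin d) ℂ) (hΩsym : Ω.IsSymm)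
    (hΩpos : (Ω.map Complex.im).PosDef)
    (a : (Fin d → Fin N) → ℂ) (z : Fin d → ℂ) (m k : Fin d → ℤ) :
    bargmann N Ω a (fun i => z i + Complex.I * (m i : ℂ)) = bargmann N Ω a z ∧
    bargmann N Ω a (fun i => z i - Complex.I * ∑ j, Ω i j * (k j : ℂ)) =
      Complex.exp (-(Real.pi : ℂ) * Complex.I * N * quadFormC Ω (fun i => (k i : ℂ))
          + 2 * (Real.pi : ℂ) * N * ∑ i, z i * (k i : ℂ)) *
        bargmann N Ω a z := by
  constructor
  · simp only [bargmann]
    refine Finset.sum_congr rfl fun n _ => ?_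
    have hθ : riemannTheta N Ω (fun i =>
        Complex.I * ((z i + Complex.I * (m i:ℂ)) + Complex.I * (∑ j, Ω i j * ((n j:ℕ):ℂ)) / N))
        = riemannTheta N Ω (fun i =>
          Complex.I * (z i + Complex.I * (∑ j, Ω i j * ((n j:ℕ):ℂ)) / N)) := by
      have h := riemannTheta_add_int N Ω
        (fun i => Complex.I * (z i + Complex.I * (∑ j, Ω i j * ((n j:ℕ):ℂ)) / N)) (fun i => -(m i))
      rw [← h]
      refine congrArg _ (funext fun i => ?_)
      push_cast
      linear_combination (m i : ℂ) * Complex.I_sq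
    have hexp : Complex.exp (2*(Real.pi:ℂ) * ∑ i, (z i + Complex.I*(m i:ℂ)) * ((n i:ℕ):ℂ))
        = Complex.exp (2*(Real.pi:ℂ) * ∑ i, z i * ((n i:ℕ):ℂ)) := by
      have hs : ∑ i, (z i + Complex.I*(m i:ℂ)) * ((n i:ℕ):ℂ)
          = (∑ i, z i * ((n i:ℕ):ℂ)) + Complex.I * ((∑ i, m i * (n i:ℕ) : ℤ):ℂ) := by
        push_cast
        rw [Finset.mul_sum, ← Finset.sum_add_distrib]
        exact Finset.sum_congr rfl fun i _ => by ring
      rw [hs, show 2*(Real.pi:ℂ) * ((∑ i, z i * ((n i:ℕ):ℂ)) + Complex.I * ((∑ i, m i * (n i:ℕ) : ℤ):ℂ))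
          = 2*(Real.pi:ℂ) * (∑ i, z i * ((n i:ℕ):ℂ))
            + 2*(Real.pi:ℂ)*Complex.I*((∑ i, m i * (n i:ℕ) : ℤ):ℂ) by ring]
      rw [Complex.exp_add, exp_two_pi_I_int, mul_one]
    rw [hθ, hexp]
  · simp only [bargmann]
    rw [Finset.mul_sum]
    refine Finset.sum_congr rfl fun n _ => ?_
    have harg : (fun i => Complex.I * ((z i - Complex.I * ∑ j, Ω i j * (k j:ℂ))
          + Complex.I * (∑ j, Ω i j * ((n j:ℕ):ℂ)) / N))
        = fun i => (Complex.I * (z i + Complex.I * (∑ j, Ω i j * ((n j:ℕ):ℂ)) / N))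
            + ∑ j, Ω i j * (k j:ℂ) := by
      funext i
      linear_combination (-(∑ j, Ω i j * (k j:ℂ))) * Complex.I_sq
    rw [harg, riemannTheta_add_omega N Ω hΩsym _ k]
    have hN0 : (N:ℂ) ≠ 0 := Nat.cast_ne_zero.mpr hN.ne'
    have hNN : (N:ℂ) * (N:ℂ)⁻¹ = 1 := mul_inv_cancel₀ hN0
    have h1 : ∑ i, (z i - Complex.I * ∑ j, Ω i j * (k j:ℂ)) * ((n i:ℕ):ℂ)
        = (∑ i, z i * ((n i:ℕ):ℂ))
          - Complex.I * ∑ i, ∑ j, (k i:ℂ) * Ω i j * ((n j:ℕ):ℂ) := by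
      rw [← bform_comm Ω hΩsym (fun i => ((n i:ℕ):ℂ)) (fun i => (k i:ℂ))]
      rw [Finset.mul_sum, ← Finset.sum_sub_distrib]
      refine Finset.sum_congr rfl fun i _ => ?_
      rw [show ∑ j, ((n i:ℕ):ℂ)*Ω i j*(k j:ℂ) = ((n i:ℕ):ℂ) * ∑ j, Ω i j * (k j:ℂ) by
        rw [Finset.mul_sum]; exact Finset.sum_congr rfl fun j _ => by ring]
      ring
    have h2 : ∑ i, (k i:ℂ) * (Complex.I * (z i + Complex.I * (∑ j, Ω i j * ((n j:ℕ):ℂ)) / N))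
        = Complex.I * (∑ i, z i * (k i:ℂ))
          + (Complex.I*Complex.I/N) * ∑ i, ∑ j, (k i:ℂ) * Ω i j * ((n j:ℕ):ℂ) := by
      rw [Finset.mul_sum, Finset.mul_sum, ← Finset.sum_add_distrib]
      refine Finset.sum_congr rfl fun i _ => ?_
      rw [show ∑ j, (k i:ℂ)*Ω i j*((n j:ℕ):ℂ) = (k i:ℂ) * ∑ j, Ω i j * ((n j:ℕ):ℂ) by
        rw [Finset.mul_sum]; exact Finset.sum_congr rfl fun j _ => by ring]
      ring
    have key : Complex.exp (2*(Real.pi:ℂ) * ∑ i, (z i - Complex.I * ∑ j, Ω i j * (k j:ℂ)) * ((n i:ℕ):ℂ))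
        * Complex.exp (-(Real.pi:ℂ)*Complex.I*N*quadFormC Ω (fun i => (k i:ℂ))
            - 2*(Real.pi:ℂ)*Complex.I*N*∑ i, (k i:ℂ) *
              (Complex.I * (z i + Complex.I * (∑ j, Ω i j * ((n j:ℕ):ℂ)) / N)))
        = Complex.exp (-(Real.pi:ℂ)*Complex.I*N*quadFormC Ω (fun i => (k i:ℂ))
            + 2*(Real.pi:ℂ)*N*∑ i, z i * (k i:ℂ))
          * Complex.exp (2*(Real.pi:ℂ) * ∑ i, z i * ((n i:ℕ):ℂ)) := by
      rw [← Complex.exp_add, ← Complex.exp_add]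
      congr 1
      rw [h1, h2]
      linear_combination (2*(Real.pi:ℂ)*Complex.I*(∑ i, ∑ j, (k i:ℂ) * Ω i j * ((n j:ℕ):ℂ))) * hNN
        + (-(2*(Real.pi:ℂ)*N*(∑ i, z i * (k i:ℂ)))
            - 2*(Real.pi:ℂ)*Complex.I*(∑ i, ∑ j, (k i:ℂ) * Ω i j * ((n j:ℕ):ℂ))*(N:ℂ)*(N:ℂ)⁻¹) * Complex.I_sq
    linear_combination (a n * Complex.exp (-(Real.pi:ℂ) * quadFormC Ω (fun i => ((n i:ℕ):ℂ)) / N)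
      * riemannTheta N Ω (fun i =>
          Complex.I * (z i + Complex.I * (∑ j, Ω i j * ((n j:ℕ):ℂ)) / N))) * key
end

section
/- The sampling-periodization commutation underlying Theorem 3.1: for Schwartz $f, g$ on $\mathbb{R}^d$ and $k, l \in I_N$, the STFT of the double periodization evaluated at the sample points satisfies $\mathbf{V}_g(\mathbf{\Sigma}_N f)(k, l/N) = \sum_{m\in I_N}\mathbf{f}_N[m]\,\overline{\mathbf{g}_N[m-k]}\,e^{-2\pi i l^T m/N}$, where $\mathbf{f}_N[m] := \sum_{j\in\mathbb{Z}^d} f(m - jN)$ and similarly for $\mathbf{g}_N$ (indices taken mod $N$); i.e. it equals the discrete Gabor transform of the periodized samples. -/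
open scoped BigOperators

/-- The periodized samples `f_N[m] = ∑_{j∈ℤᵈ} f(m - jN)`, indexed mod `N`. -/
noncomputable def perSamples {d N : ℕ} (f : (Fin d → ℝ) → ℂ) (m : Fin d → ZMod N) : ℂ :=
  ∑' j : Fin d → ℤ, f (fun i => ((m i).val : ℝ) - j i * N)

lemma zmod_sub_dvd {N : ℕ} [NeZero N] (a b : ZMod N) :
    (N:ℤ) ∣ ((a.val : ℤ) - b.val - ((a-b).val : ℤ)) := by
  have h : (((a.val : ℤ) - b.val - ((a-b).val : ℤ) : ℤ) : ZMod N) = 0 := by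
    push_cast
    simp [ZMod.natCast_val, ZMod.cast_id]
  exact (ZMod.intCast_zmod_eq_zero_iff_dvd _ N).mp h

/-- for Schwartz `f, g`, the STFT of the double periodization
`Σ_N f = ∑_{n∈I_N} f_N[n] ε_n` evaluated at the sample points `(k, l/N)` equals the
discrete Gabor transform of the periodized samples:
`V_g(Σ_N f)(k, l/N) = ∑_{m∈I_N} f_N[m] conj(g_N[m-k]) e^{-2πi lᵀm/N}`. -/
theorem stft_doublePer_eq_dgt {d N : ℕ} [NeZero N]
    (f g : SchwartzMap (Fin d → ℝ) ℂ) (k l : Fin d → ZMod N) :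
    (∑ n : Fin d → ZMod N, perSamples (⇑f) n *
        ∑' j : Fin d → ℤ,
          (starRingEnd ℂ) (g (fun i => ((n i).val : ℝ) + N * j i - ((k i).val : ℝ))) *
            Complex.exp (-2 * (Real.pi : ℂ) * Complex.I *
              ∑ i, ((((l i).val : ℝ) / N : ℝ) : ℂ) * ((((n i).val : ℕ) : ℂ) + N * j i))) =
      ∑ m : Fin d → ZMod N, perSamples (⇑f) m *
        (starRingEnd ℂ) (perSamples (⇑g) (m - k)) *
        Complex.exp (-2 * (Real.pi : ℂ) * Complex.I *
          (∑ i, ((l i).val : ℝ) * ((m i).val : ℝ)) / N) := by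
  refine Finset.sum_congr rfl fun n _ => ?_
  have hN : (N:ℂ) ≠ 0 := by exact_mod_cast (NeZero.ne N)
  have hNR : (N:ℝ) ≠ 0 := by exact_mod_cast (NeZero.ne N)
  set m : Fin d → ZMod N := n - k with hm
  set c : Fin d → ℤ := fun i =>
    (((n i).val : ℤ) - (k i).val - (((m i)).val : ℤ)) / N with hcdef
  have hc : ∀ i, (N:ℤ) * c i = ((n i).val : ℤ) - (k i).val - (((m i)).val : ℤ) := by
    intro i
    exact Int.mul_ediv_cancel' (by simpa [hm] using zmod_sub_dvd (n i) (k i))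
  set E : ℂ := Complex.exp (-2 * (Real.pi : ℂ) * Complex.I *
      ((∑ i, ((l i).val : ℝ) * ((n i).val : ℝ) : ℝ) : ℂ) / N) with hE
  have hexp : ∀ j : Fin d → ℤ,
      Complex.exp (-2 * (Real.pi : ℂ) * Complex.I *
        ∑ i, ((((l i).val : ℝ) / N : ℝ) : ℂ) * ((((n i).val : ℕ) : ℂ) + N * j i)) = E := by
    intro j
    have key : (∑ i, ((((l i).val : ℝ) / N : ℝ) : ℂ) * ((((n i).val : ℕ) : ℂ) + N * j i))
        = ((∑ i, ((l i).val : ℝ) * ((n i).val : ℝ) : ℝ) : ℂ) / N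
          + ((∑ i, ((l i).val : ℤ) * j i : ℤ) : ℂ) := by
      push_cast
      rw [Finset.sum_div, ← Finset.sum_add_distrib]
      refine Finset.sum_congr rfl fun i _ => ?_
      field_simp
    rw [key, mul_add, Complex.exp_add]
    have h1 : -2 * (Real.pi : ℂ) * Complex.I * ((∑ i, ((l i).val : ℤ) * j i : ℤ) : ℂ)
        = ((-(∑ i, ((l i).val : ℤ) * j i) : ℤ) : ℂ) * (2 * (Real.pi : ℂ) * Complex.I) := by
      push_cast; ring
    rw [h1, Complex.exp_int_mul_two_pi_mul_I, mul_one, hE, mul_div_assoc]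
  have h3 : (∑' j : Fin d → ℤ,
      (starRingEnd ℂ) (g (fun i => ((n i).val : ℝ) + N * j i - ((k i).val : ℝ))))
      = (starRingEnd ℂ) (perSamples (⇑g) m) := by
    simp only [starRingEnd_apply]
    rw [← tsum_star]
    congr 1
    rw [perSamples]
    rw [← Equiv.tsum_eq ((Equiv.neg (Fin d → ℤ)).trans (Equiv.subRight c))
      (fun j => g (fun i => ((m i).val : ℝ) - j i * N))]
    refine tsum_congr fun j => ?_
    congr 1
    funext i
    have hci := hc i
    have key : ((m i).val : ℝ) - ((-(j i) - c i : ℤ) : ℝ) * N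
        = ((n i).val : ℝ) + N * j i - ((k i).val : ℝ) := by
      have h5 : (((n i).val : ℤ) : ℝ) - (((k i).val : ℤ) : ℝ) - (((m i).val : ℤ) : ℝ)
          = (N : ℝ) * (c i : ℝ) := by exact_mod_cast hci.symm
      push_cast at h5 ⊢
      linarith
    simpa using key.symm
  have hts : (∑' j : Fin d → ℤ,
      (starRingEnd ℂ) (g (fun i => ((n i).val : ℝ) + N * j i - ((k i).val : ℝ))) *
        Complex.exp (-2 * (Real.pi : ℂ) * Complex.I *
          ∑ i, ((((l i).val : ℝ) / N : ℝ) : ℂ) * ((((n i).val : ℕ) : ℂ) + N * j i)))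
      = (starRingEnd ℂ) (perSamples (⇑g) m) * E := by
    rw [← h3, ← tsum_mul_right]
    exact tsum_congr fun j => by rw [hexp j]
  rw [hts, ← mul_assoc]
end
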